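/- Let H be a quasitriangular Hopf algebra with antipode γ, R-matrix R, involutive coalgebra anti-algebra automorphism τ, and let S ∈ H⊗A be a universal S-matrix with (ε⊗id)(S) = 1, where A is an associative unital algebra. Then S is invertible in H⊗A with inverse S⁻¹ = ((γτ)(R₁)⊗1)·(γ⊗id)(S)·(R₂⊗1), where R = R₁⊗R₂ (implicit summation). -/

import Mathlib

open TensorProduct

section QT

variable (k H : Type*) [Field k] [Ring H] [Bialgebra k H]

/-- `(Δ ⊗ id)` as a map `H ⊗ H → H ⊗ (H ⊗ H)`. -/
noncomputable def deltaL : H ⊗[k] H →ₗ[k] H ⊗[k] (H ⊗[k] H) :=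
  (TensorProduct.assoc k H H H).toLinearMap ∘ₗ
    TensorProduct.map (Coalgebra.comul (R := k)) LinearMap.id

/-- `(id ⊗ Δ)` as a map `H ⊗ H → H ⊗ (H ⊗ H)`. -/
noncomputable def deltaR : H ⊗[k] H →ₗ[k] H ⊗[k] (H ⊗[k] H) :=
  TensorProduct.map LinearMap.id (Coalgebra.comul (R := k))

/-- embedding of `H ⊗ H` on legs 1, 2 of `H ⊗ H ⊗ H`. -/
noncomputable def leg12 : H ⊗[k] H →ₗ[k] H ⊗[k] (H ⊗[k] H) :=
  TensorProduct.map LinearMap.id ((TensorProduct.mk k H H).flip (1 : H))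

/-- embedding of `H ⊗ H` on legs 1, 3 of `H ⊗ H ⊗ H`. -/
noncomputable def leg13 : H ⊗[k] H →ₗ[k] H ⊗[k] (H ⊗[k] H) :=
  TensorProduct.map LinearMap.id (TensorProduct.mk k H H (1 : H))

/-- embedding of `H ⊗ H` on legs 2, 3 of `H ⊗ H ⊗ H`. -/
noncomputable def leg23 : H ⊗[k] H →ₗ[k] H ⊗[k] (H ⊗[k] H) :=
  TensorProduct.mk k H (H ⊗[k] H) (1 : H)

/-- `R` (with two-sided inverse `Rinv`) is a universal R-matrix (quasitriangular
structure) on the bialgebra `H`. -/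
noncomputable def IsUnivRMatrix (R Rinv : H ⊗[k] H) : Prop :=
  R * Rinv = 1 ∧ Rinv * R = 1 ∧
  deltaL k H R = leg13 k H R * leg23 k H R ∧
  deltaR k H R = leg13 k H R * leg12 k H R ∧
  ∀ h : H, R * Coalgebra.comul h =
    (TensorProduct.comm k H H) (Coalgebra.comul h) * R

/-- `τ` is an involutive coalgebra map and algebra anti-automorphism of `H`. -/
noncomputable def IsSkewInvolution (τ : H →ₗ[k] H) : Prop :=
  (∀ x : H, τ (τ x) = x) ∧ (∀ x y : H, τ (x * y) = τ y * τ x) ∧ τ 1 = 1 ∧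
  Coalgebra.comul (R := k) ∘ₗ τ = (TensorProduct.map τ τ) ∘ₗ Coalgebra.comul ∧
  Coalgebra.counit (R := k) ∘ₗ τ = Coalgebra.counit

end QT

section SMat

variable (k H A : Type*) [Field k] [Ring H] [Bialgebra k H] [Ring A] [Algebra k A]

/-- `(Δ ⊗ id) : H ⊗ A → H ⊗ (H ⊗ A)`. -/
noncomputable def deltaLA : H ⊗[k] A →ₗ[k] H ⊗[k] (H ⊗[k] A) :=
  (TensorProduct.assoc k H H A).toLinearMap ∘ₗ
    TensorProduct.map (Coalgebra.comul (R := k)) LinearMap.id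

/-- `(Δ^op ⊗ id) : H ⊗ A → H ⊗ (H ⊗ A)`. -/
noncomputable def deltaOpLA : H ⊗[k] A →ₗ[k] H ⊗[k] (H ⊗[k] A) :=
  (TensorProduct.assoc k H H A).toLinearMap ∘ₗ
    TensorProduct.map ((TensorProduct.comm k H H).toLinearMap ∘ₗ Coalgebra.comul (R := k))
      LinearMap.id

/-- embedding of `H ⊗ A` on legs 1, 3 of `H ⊗ H ⊗ A`:  `S ↦ S₁₃`. -/
noncomputable def sleg13 : H ⊗[k] A →ₗ[k] H ⊗[k] (H ⊗[k] A) :=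
  TensorProduct.map LinearMap.id (TensorProduct.mk k H A (1 : H))

/-- embedding of `H ⊗ A` on legs 2, 3 of `H ⊗ H ⊗ A`:  `S ↦ S₂₃`. -/
noncomputable def sleg23 : H ⊗[k] A →ₗ[k] H ⊗[k] (H ⊗[k] A) :=
  TensorProduct.mk k H (H ⊗[k] A) (1 : H)

/-- embedding of `H ⊗ H` on legs 1, 2 of `H ⊗ H ⊗ A`:  `R ↦ R₁₂`. -/
noncomputable def rleg12 : H ⊗[k] H →ₗ[k] H ⊗[k] (H ⊗[k] A) :=
  TensorProduct.map LinearMap.id ((TensorProduct.mk k H A).flip (1 : A))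

/-- `S ∈ H ⊗ A` is a universal S-matrix for `(H, R, τ)`: it satisfies the
characteristic identity `(Δ⊗id)(S) = S₁₃ R'₁₂ S₂₃` where `R' = (τ⊗id)(R)`. -/
noncomputable def IsSMatrix (R : H ⊗[k] H) (τ : H →ₗ[k] H) (S : H ⊗[k] A) : Prop :=
  deltaLA k H A S =
    sleg13 k H A S * rleg12 k H A ((TensorProduct.map τ LinearMap.id) R) * sleg23 k H A S

/-- `(ε ⊗ id) : H ⊗ A → A`. -/
noncomputable def epsA : H ⊗[k] A →ₗ[k] A :=
  (TensorProduct.lid k A).toLinearMap ∘ₗ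
    TensorProduct.map (Coalgebra.counit (R := k)) LinearMap.id

end SMat

section Sandwich

variable (k H A : Type*) [Field k] [Ring H] [Bialgebra k H] [Ring A] [Algebra k A]

/-- multiply an extra `H`-leg into the `H`-leg of `H ⊗ A`:  `a ⊗ (h ⊗ x) ↦ (a*h) ⊗ x`. -/
noncomputable def mulIn : H ⊗[k] (H ⊗[k] A) →ₗ[k] H ⊗[k] A :=
  (TensorProduct.map (LinearMap.mul' k H) LinearMap.id) ∘ₗ
    (TensorProduct.assoc k H H A).symm.toLinearMap

/-- embedding of `H ⊗ H` on legs 1, 3 of `H ⊗ H ⊗ H ⊗ A`. -/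
noncomputable def qleg13 : H ⊗[k] H →ₗ[k] H ⊗[k] (H ⊗[k] (H ⊗[k] A)) :=
  TensorProduct.map LinearMap.id
    ((TensorProduct.mk k H (H ⊗[k] A) (1 : H)) ∘ₗ ((TensorProduct.mk k H A).flip (1 : A)))

/-- embedding of `H ⊗ A` on legs 2, 4 of `H ⊗ H ⊗ H ⊗ A`. -/
noncomputable def qleg24 : H ⊗[k] A →ₗ[k] H ⊗[k] (H ⊗[k] (H ⊗[k] A)) :=
  (TensorProduct.mk k H (H ⊗[k] (H ⊗[k] A)) (1 : H)) ∘ₗ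
    TensorProduct.map LinearMap.id (TensorProduct.mk k H A (1 : H))

/-- multiply the three `H`-legs of `H ⊗ H ⊗ H ⊗ A` together (in order). -/
noncomputable def collapse : H ⊗[k] (H ⊗[k] (H ⊗[k] A)) →ₗ[k] H ⊗[k] A :=
  mulIn k H A ∘ₗ TensorProduct.map LinearMap.id (mulIn k H A)

/-- the sandwich `Σ (u₁ ⊗ 1) · S · (u₂ ⊗ 1)` for `u ∈ H ⊗ H`, `S ∈ H ⊗ A`. -/
noncomputable def sandwich (u : H ⊗[k] H) (S : H ⊗[k] A) : H ⊗[k] A :=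
  collapse k H A (qleg13 k H A u * qleg24 k H A S)

end Sandwich

section AntipodeMul
open TensorProduct Coalgebra HopfAlgebra

variable {k H : Type*} [CommSemiring k] [Semiring H] [HopfAlgebra k H]

noncomputable def ReprMul {ι κ : Type*} {a b : H} (r1 : Repr k a ι) (r2 : Repr k b κ) :
    Repr k (a * b) (ι × κ) where
  index := r1.index ×ˢ r2.index
  left p := r1.left p.1 * r2.left p.2
  right p := r1.right p.1 * r2.right p.2
  eq := by
    rw [Finset.sum_product]
    rw [Bialgebra.comul_mul, ← r1.eq, ← r2.eq, Finset.sum_mul_sum]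
    simp [Algebra.TensorProduct.tmul_mul_tmul]

lemma counit_smul_sum {M : Type*} [AddCommMonoid M] [Module k M]
    {ι : Type*} {a : H} (r : Repr k a ι) (f : H →ₗ[k] M) :
    ∑ i ∈ r.index, counit (R := k) (r.left i) • f (r.right i) = f a := by
  have h2 := congrArg (f ∘ₗ (TensorProduct.lid k H).toLinearMap) (sum_counit_tmul_eq r)
  simp only [map_sum, LinearMap.coe_comp, LinearEquiv.coe_coe, Function.comp_apply,
    TensorProduct.lid_tmul, map_smul, one_smul] at h2
  exact h2

lemma smul_counit_sum {M : Type*} [AddCommMonoid M] [Module k M]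
    {ι : Type*} {a : H} (r : Repr k a ι) (f : H →ₗ[k] M) :
    ∑ i ∈ r.index, counit (R := k) (r.right i) • f (r.left i) = f a := by
  have h2 := congrArg (f ∘ₗ (TensorProduct.rid k H).toLinearMap) (sum_tmul_counit_eq r)
  simp only [map_sum, LinearMap.coe_comp, LinearEquiv.coe_coe, Function.comp_apply,
    TensorProduct.rid_tmul, map_smul, one_smul] at h2
  exact h2

lemma collapseL {ι : Type*} {c : H} (r : Repr k c ι) (C : H) :
    ∑ j ∈ r.index, antipode (R := k) (r.left j) * (r.right j * C)
      = counit (R := k) c • C := by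
  simp_rw [← mul_assoc]
  rw [← Finset.sum_mul, sum_antipode_mul_eq_smul r, smul_mul_assoc, one_mul]

lemma collapse_gm {ι : Type*} {c : H} (r : Repr k c ι) (P C : H) :
    ∑ j ∈ r.index, P * antipode (R := k) (r.left j) * r.right j * C
      = counit (R := k) c • (P * C) := by
  calc ∑ j ∈ r.index, P * antipode (R := k) (r.left j) * r.right j * C
      = P * (∑ j ∈ r.index, antipode (R := k) (r.left j) * r.right j) * C := by
        rw [Finset.mul_sum, Finset.sum_mul]; simp [mul_assoc]
    _ = counit (R := k) c • (P * C) := by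
        rw [sum_antipode_mul_eq_smul r, mul_smul_comm, smul_mul_assoc, mul_one]

lemma collapse_mg {ι : Type*} {c : H} (r : Repr k c ι) (P C : H) :
    ∑ j ∈ r.index, P * r.left j * antipode (R := k) (r.right j) * C
      = counit (R := k) c • (P * C) := by
  calc ∑ j ∈ r.index, P * r.left j * antipode (R := k) (r.right j) * C
      = P * (∑ j ∈ r.index, r.left j * antipode (R := k) (r.right j)) * C := by
        rw [Finset.mul_sum, Finset.sum_mul]; simp [mul_assoc]
    _ = counit (R := k) c • (P * C) := by
        rw [sum_mul_antipode_eq_smul r, mul_smul_comm, smul_mul_assoc, mul_one]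

noncomputable def T3 (f g h : H →ₗ[k] H) : H ⊗[k] (H ⊗[k] H) →ₗ[k] H :=
  LinearMap.mul' k H ∘ₗ TensorProduct.map f (LinearMap.mul' k H ∘ₗ TensorProduct.map g h)

@[simp] lemma T3_tmul (f g h : H →ₗ[k] H) (x y z : H) :
    T3 f g h (x ⊗ₜ[k] (y ⊗ₜ[k] z)) = f x * (g y * h z) := by
  simp [T3]

lemma sum4_comm {M : Type*} [AddCommMonoid M] {ι₁ ι₂ : Type*} {κ₁ : ι₁ → Type*} {κ₂ : ι₂ → Type*}
    (s₁ : Finset ι₁) (t₁ : ∀ i, Finset (κ₁ i)) (s₂ : Finset ι₂) (t₂ : ∀ i, Finset (κ₂ i))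
    (f : ∀ i : ι₁, κ₁ i → ∀ i' : ι₂, κ₂ i' → M) :
    ∑ i ∈ s₁, ∑ j ∈ t₁ i, ∑ i' ∈ s₂, ∑ j' ∈ t₂ i', f i j i' j'
      = ∑ i' ∈ s₂, ∑ j' ∈ t₂ i', ∑ i ∈ s₁, ∑ j ∈ t₁ i, f i j i' j' := by
  trans ∑ i ∈ s₁, ∑ i' ∈ s₂, ∑ j ∈ t₁ i, ∑ j' ∈ t₂ i', f i j i' j'
  · exact Finset.sum_congr rfl fun i _ => Finset.sum_comm
  trans ∑ i' ∈ s₂, ∑ i ∈ s₁, ∑ j ∈ t₁ i, ∑ j' ∈ t₂ i', f i j i' j'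
  · exact Finset.sum_comm
  refine Finset.sum_congr rfl fun i' _ => ?_
  trans ∑ i ∈ s₁, ∑ j' ∈ t₂ i', ∑ j ∈ t₁ i, f i j i' j'
  · exact Finset.sum_congr rfl fun i _ => Finset.sum_comm
  exact Finset.sum_comm

theorem antipode_mul (a b : H) :
    antipode (R := k) (a * b) = antipode (R := k) (A := H) b * antipode (R := k) a := by
  classical
  set ra := ℛ k a with hra
  set rb := ℛ k b with hrb
  set ra1 : ∀ i, Repr k (ra.left i) (H × H) := fun i => ℛ k (ra.left i) with hra1
  set ra2 : ∀ i, Repr k (ra.right i) (H × H) := fun i => ℛ k (ra.right i) with hra2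
  set rb1 : ∀ i, Repr k (rb.left i) (H × H) := fun i => ℛ k (rb.left i) with hrb1
  set rb2 : ∀ i, Repr k (rb.right i) (H × H) := fun i => ℛ k (rb.right i) with hrb2
  -- Q1 : fully left-nested Sweedler legs
  have eA : (∑ i' ∈ rb.index, ∑ j' ∈ (rb1 i').index, ∑ i ∈ ra.index, ∑ j ∈ (ra1 i).index,
      antipode (R := k) ((rb1 i').left j') * antipode (R := k) ((ra1 i).left j) *
        (ra1 i).right j * ((rb1 i').right j' * antipode (R := k) (ra.right i * rb.right i')))
      = antipode (R := k) (a * b) := by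
    calc ∑ i' ∈ rb.index, ∑ j' ∈ (rb1 i').index, ∑ i ∈ ra.index, ∑ j ∈ (ra1 i).index,
          antipode (R := k) ((rb1 i').left j') * antipode (R := k) ((ra1 i).left j) *
            (ra1 i).right j * ((rb1 i').right j' * antipode (R := k) (ra.right i * rb.right i'))
        = ∑ i' ∈ rb.index, ∑ j' ∈ (rb1 i').index,
            antipode (R := k) ((rb1 i').left j') *
              ((rb1 i').right j' * antipode (R := k) (a * rb.right i')) := by
          refine Finset.sum_congr rfl fun i' _ => Finset.sum_congr rfl fun j' _ => ?_
          calc ∑ i ∈ ra.index, ∑ j ∈ (ra1 i).index,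
                antipode (R := k) ((rb1 i').left j') * antipode (R := k) ((ra1 i).left j) *
                  (ra1 i).right j * ((rb1 i').right j' * antipode (R := k) (ra.right i * rb.right i'))
              = ∑ i ∈ ra.index, counit (R := k) (ra.left i) •
                  (antipode (R := k) ((rb1 i').left j') *
                    ((rb1 i').right j' * antipode (R := k) (ra.right i * rb.right i'))) :=
                Finset.sum_congr rfl fun i _ => collapse_gm (ra1 i) _ _
            _ = antipode (R := k) ((rb1 i').left j') *
                  ((rb1 i').right j' * antipode (R := k) (a * rb.right i')) := by
                simpa using counit_smul_sum ra
                  (LinearMap.mulLeft k (antipode (R := k) ((rb1 i').left j')) ∘ₗ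
                    LinearMap.mulLeft k ((rb1 i').right j') ∘ₗ antipode (R := k) ∘ₗ
                      LinearMap.mulRight k (rb.right i'))
      _ = ∑ i' ∈ rb.index, counit (R := k) (rb.left i') • antipode (R := k) (a * rb.right i') :=
          Finset.sum_congr rfl fun i' _ => collapseL (rb1 i') _
      _ = antipode (R := k) (a * b) := by
          simpa using counit_smul_sum rb (antipode (R := k) ∘ₗ LinearMap.mulLeft k a)
  
  -- Step B1: coassociativity relabeling in `a`
  have eB1 : (∑ i' ∈ rb.index, ∑ j' ∈ (rb1 i').index, ∑ i ∈ ra.index, ∑ j ∈ (ra1 i).index,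
      antipode (R := k) ((rb1 i').left j') * antipode (R := k) ((ra1 i).left j) *
        (ra1 i).right j * ((rb1 i').right j' * antipode (R := k) (ra.right i * rb.right i')))
      = ∑ i' ∈ rb.index, ∑ j' ∈ (rb1 i').index, ∑ i ∈ ra.index, ∑ j ∈ (ra2 i).index,
      antipode (R := k) ((rb1 i').left j') * antipode (R := k) (ra.left i) *
        (ra2 i).left j * ((rb1 i').right j' * antipode (R := k) ((ra2 i).right j * rb.right i')) := by
    refine Finset.sum_congr rfl fun i' _ => Finset.sum_congr rfl fun j' _ => ?_
    have h5 := sum_tmul_tmul_eq ra ra1 ra2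
    apply_fun (T3
      (LinearMap.mulLeft k (antipode (R := k) ((rb1 i').left j')) ∘ₗ antipode (R := k))
      LinearMap.id
      (LinearMap.mulLeft k ((rb1 i').right j') ∘ₗ antipode (R := k) ∘ₗ
        LinearMap.mulRight k (rb.right i'))) at h5
    simpa [map_sum, mul_assoc] using h5
  -- reorder the sums
  have eswap : (∑ i' ∈ rb.index, ∑ j' ∈ (rb1 i').index, ∑ i ∈ ra.index, ∑ j ∈ (ra2 i).index,
      antipode (R := k) ((rb1 i').left j') * antipode (R := k) (ra.left i) *
        (ra2 i).left j * ((rb1 i').right j' * antipode (R := k) ((ra2 i).right j * rb.right i')))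
      = ∑ i ∈ ra.index, ∑ j ∈ (ra2 i).index, ∑ i' ∈ rb.index, ∑ j' ∈ (rb1 i').index,
      antipode (R := k) ((rb1 i').left j') * antipode (R := k) (ra.left i) *
        (ra2 i).left j * ((rb1 i').right j' * antipode (R := k) ((ra2 i).right j * rb.right i')) :=
    sum4_comm rb.index (fun i' => (rb1 i').index) ra.index (fun i => (ra2 i).index) _
  -- Step B2: coassociativity relabeling in `b`
  have eB2 : (∑ i ∈ ra.index, ∑ j ∈ (ra2 i).index, ∑ i' ∈ rb.index, ∑ j' ∈ (rb1 i').index,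
      antipode (R := k) ((rb1 i').left j') * antipode (R := k) (ra.left i) *
        (ra2 i).left j * ((rb1 i').right j' * antipode (R := k) ((ra2 i).right j * rb.right i')))
      = ∑ i ∈ ra.index, ∑ j ∈ (ra2 i).index, ∑ i' ∈ rb.index, ∑ j' ∈ (rb2 i').index,
      antipode (R := k) (rb.left i') * antipode (R := k) (ra.left i) *
        (ra2 i).left j * ((rb2 i').left j' * antipode (R := k) ((ra2 i).right j * (rb2 i').right j')) := by
    refine Finset.sum_congr rfl fun i _ => Finset.sum_congr rfl fun j _ => ?_
    have h5 := sum_tmul_tmul_eq rb rb1 rb2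
    apply_fun (T3 (antipode (R := k))
      (LinearMap.mulLeft k (antipode (R := k) (ra.left i) * (ra2 i).left j))
      (antipode (R := k) ∘ₗ LinearMap.mulLeft k ((ra2 i).right j))) at h5
    simpa [map_sum, mul_assoc] using h5
  -- Step C: collapse to `antipode b * antipode a`
  have eC : (∑ i ∈ ra.index, ∑ j ∈ (ra2 i).index, ∑ i' ∈ rb.index, ∑ j' ∈ (rb2 i').index,
      antipode (R := k) (rb.left i') * antipode (R := k) (ra.left i) *
        (ra2 i).left j * ((rb2 i').left j' * antipode (R := k) ((ra2 i).right j * (rb2 i').right j')))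
      = antipode (R := k) (A := H) b * antipode (R := k) a := by
    calc ∑ i ∈ ra.index, ∑ j ∈ (ra2 i).index, ∑ i' ∈ rb.index, ∑ j' ∈ (rb2 i').index,
          antipode (R := k) (rb.left i') * antipode (R := k) (ra.left i) *
            (ra2 i).left j * ((rb2 i').left j' * antipode (R := k) ((ra2 i).right j * (rb2 i').right j'))
        = ∑ i ∈ ra.index, ∑ i' ∈ rb.index, ∑ j ∈ (ra2 i).index, ∑ j' ∈ (rb2 i').index,
          antipode (R := k) (rb.left i') * antipode (R := k) (ra.left i) *
            ((ra2 i).left j * (rb2 i').left j') *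
              antipode (R := k) ((ra2 i).right j * (rb2 i').right j') * 1 := by
          refine Finset.sum_congr rfl fun i _ => ?_
          rw [Finset.sum_comm]
          exact Finset.sum_congr rfl fun i' _ => Finset.sum_congr rfl fun j _ =>
            Finset.sum_congr rfl fun j' _ => by simp [mul_assoc]
      _ = ∑ i ∈ ra.index, ∑ i' ∈ rb.index,
            counit (R := k) (ra.right i * rb.right i') •
              (antipode (R := k) (rb.left i') * antipode (R := k) (ra.left i) * 1) := by
          refine Finset.sum_congr rfl fun i _ => Finset.sum_congr rfl fun i' _ => ?_
          have h6 := collapse_mg (ReprMul (ra2 i) (rb2 i'))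
            (antipode (R := k) (rb.left i') * antipode (R := k) (ra.left i)) 1
          rw [← Finset.sum_product']
          exact h6
      _ = ∑ i ∈ ra.index, counit (R := k) (ra.right i) •
            ∑ i' ∈ rb.index, counit (R := k) (rb.right i') •
              (antipode (R := k) (rb.left i') * antipode (R := k) (ra.left i)) := by
          simp [Bialgebra.counit_mul, mul_smul, Finset.smul_sum, mul_one]
      _ = ∑ i ∈ ra.index, counit (R := k) (ra.right i) •
            (antipode (R := k) (A := H) b * antipode (R := k) (ra.left i)) := by
          refine Finset.sum_congr rfl fun i _ => ?_
          congr 1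
          simpa using smul_counit_sum rb
            (LinearMap.mulRight k (antipode (R := k) (ra.left i)) ∘ₗ antipode (R := k))
      _ = antipode (R := k) (A := H) b * antipode (R := k) a := by
          simpa using smul_counit_sum ra
            (LinearMap.mulLeft k (antipode (R := k) (A := H) b) ∘ₗ antipode (R := k))
  rw [← eA, eB1, eswap, eB2, eC]

end AntipodeMul

set_option synthInstance.maxHeartbeats 400000
set_option maxHeartbeats 1000000

section Main
open Coalgebra HopfAlgebra
variable {k H A : Type*} [Field k] [Ring H] [HopfAlgebra k H] [Ring A] [Algebra k A]

/-- `(γ ⊗ id)` then multiply legs 1,2. -/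
noncomputable def Fmap : H ⊗[k] (H ⊗[k] A) →ₗ[k] H ⊗[k] A :=
  mulIn k H A ∘ₗ TensorProduct.map (antipode (R := k)) LinearMap.id

/-- `(id ⊗ γ ⊗ id)` then multiply legs 1,2. -/
noncomputable def Gmap : H ⊗[k] (H ⊗[k] A) →ₗ[k] H ⊗[k] A :=
  mulIn k H A ∘ₗ TensorProduct.map LinearMap.id (TensorProduct.map (antipode (R := k)) LinearMap.id)

lemma F_deltaLA (S : H ⊗[k] A) :
    Fmap (deltaLA k H A S) = (1 : H) ⊗ₜ[k] (epsA k H A S) := by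
  induction S using TensorProduct.induction_on with
  | zero => simp
  | add x y hx hy => simp [map_add, hx, hy, tmul_add]
  | tmul h a =>
    have r := ℛ k h
    simp only [deltaLA, Fmap, mulIn, epsA, LinearMap.coe_comp, Function.comp_apply,
      LinearEquiv.coe_coe, TensorProduct.map_tmul, LinearMap.id_coe, id_eq,
      TensorProduct.lid_tmul]
    rw [← r.eq]
    simp only [sum_tmul, map_sum, TensorProduct.assoc_tmul, TensorProduct.map_tmul,
      TensorProduct.assoc_symm_tmul, LinearMap.mul'_apply, LinearMap.id_coe, id_eq]
    rw [← sum_tmul, sum_antipode_mul_eq_algebraMap_counit r, Algebra.algebraMap_eq_smul_one, smul_tmul]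

lemma G_deltaLA (S : H ⊗[k] A) :
    Gmap (deltaLA k H A S) = (1 : H) ⊗ₜ[k] (epsA k H A S) := by
  induction S using TensorProduct.induction_on with
  | zero => simp
  | add x y hx hy => simp [map_add, hx, hy, tmul_add]
  | tmul h a =>
    have r := ℛ k h
    simp only [deltaLA, Gmap, mulIn, epsA, LinearMap.coe_comp, Function.comp_apply,
      LinearEquiv.coe_coe, TensorProduct.map_tmul, LinearMap.id_coe, id_eq,
      TensorProduct.lid_tmul]
    rw [← r.eq]
    simp only [sum_tmul, map_sum, TensorProduct.assoc_tmul, TensorProduct.map_tmul,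
      TensorProduct.assoc_symm_tmul, LinearMap.mul'_apply, LinearMap.id_coe, id_eq]
    rw [← sum_tmul, sum_mul_antipode_eq_algebraMap_counit r, Algebra.algebraMap_eq_smul_one, smul_tmul]


instance (priority := 1100) tensorLeftDistrib {R M : Type*} [CommSemiring R] [Ring M] [Algebra R M]
    {N : Type*} [Ring N] [Algebra R N] : LeftDistribClass (M ⊗[R] N) :=
  ⟨Distrib.left_distrib⟩
instance (priority := 1100) tensorRightDistrib {R M : Type*} [CommSemiring R] [Ring M] [Algebra R M]
    {N : Type*} [Ring N] [Algebra R N] : RightDistribClass (M ⊗[R] N) :=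
  ⟨Distrib.right_distrib⟩
noncomputable instance (priority := 1100) tensorMulZeroClass {R M : Type*} [CommSemiring R] [Ring M] [Algebra R M]
    {N : Type*} [Ring N] [Algebra R N] : MulZeroClass (M ⊗[R] N) := inferInstance

lemma keyF (τ : H →ₗ[k] H) (Sa Sb : H ⊗[k] A) (R : H ⊗[k] H) :
    Fmap (sleg13 k H A Sa * rleg12 k H A ((TensorProduct.map τ LinearMap.id) R) * sleg23 k H A Sb)
      = sandwich k H A ((TensorProduct.map ((antipode (R := k)) ∘ₗ τ) LinearMap.id) R)
          ((TensorProduct.map (antipode (R := k)) LinearMap.id) Sa) * Sb := by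
  induction Sa using TensorProduct.induction_on with
  | zero => have h0 : ∀ q : H ⊗[k] (H ⊗[k] (H ⊗[k] A)), q * 0 = 0 := fun q => mul_zero q; have h0' : ∀ q : H ⊗[k] (H ⊗[k] (H ⊗[k] A)), 0 * q = 0 := fun q => zero_mul q; simp [sandwich, h0, h0']
  | add x y hx hy => simp only [map_add, add_mul, mul_add, hx, hy, sandwich]
  | tmul h a =>
    induction R using TensorProduct.induction_on with
    | zero => have h0 : ∀ q : H ⊗[k] (H ⊗[k] (H ⊗[k] A)), q * 0 = 0 := fun q => mul_zero q; have h0' : ∀ q : H ⊗[k] (H ⊗[k] (H ⊗[k] A)), 0 * q = 0 := fun q => zero_mul q; simp [sandwich, h0, h0']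
    | add x y hx hy => simp only [map_add, add_mul, mul_add, hx, hy, sandwich, map_add]
    | tmul r s =>
      induction Sb using TensorProduct.induction_on with
      | zero => have h0 : ∀ q : H ⊗[k] (H ⊗[k] (H ⊗[k] A)), q * 0 = 0 := fun q => mul_zero q; have h0' : ∀ q : H ⊗[k] (H ⊗[k] (H ⊗[k] A)), 0 * q = 0 := fun q => zero_mul q; simp [sandwich, h0, h0']
      | add x y hx hy => simp only [map_add, add_mul, mul_add, hx, hy]
      | tmul g b =>
        simp [Fmap, sleg13, rleg12, sleg23, sandwich, collapse, qleg13, qleg24, mulIn,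
          Algebra.TensorProduct.tmul_mul_tmul, antipode_mul (k := k), mul_assoc]

lemma keyG (τ : H →ₗ[k] H) (Sa Sb : H ⊗[k] A) (R : H ⊗[k] H) :
    Gmap (sleg13 k H A Sa * rleg12 k H A ((TensorProduct.map τ LinearMap.id) R) * sleg23 k H A Sb)
      = Sa * sandwich k H A ((TensorProduct.map τ (antipode (R := k))) R)
          ((TensorProduct.map (antipode (R := k)) LinearMap.id) Sb) := by
  induction Sa using TensorProduct.induction_on with
  | zero => have h0 : ∀ q : H ⊗[k] (H ⊗[k] (H ⊗[k] A)), q * 0 = 0 := fun q => mul_zero q; have h0' : ∀ q : H ⊗[k] (H ⊗[k] (H ⊗[k] A)), 0 * q = 0 := fun q => zero_mul q; simp [sandwich, h0, h0']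
  | add x y hx hy => simp only [map_add, add_mul, mul_add, hx, hy]
  | tmul h a =>
    induction R using TensorProduct.induction_on with
    | zero => have h0 : ∀ q : H ⊗[k] (H ⊗[k] (H ⊗[k] A)), q * 0 = 0 := fun q => mul_zero q; have h0' : ∀ q : H ⊗[k] (H ⊗[k] (H ⊗[k] A)), 0 * q = 0 := fun q => zero_mul q; simp [sandwich, h0, h0']
    | add x y hx hy => simp only [map_add, add_mul, mul_add, hx, hy, sandwich, map_add]
    | tmul r s =>
      induction Sb using TensorProduct.induction_on with
      | zero => have h0 : ∀ q : H ⊗[k] (H ⊗[k] (H ⊗[k] A)), q * 0 = 0 := fun q => mul_zero q; have h0' : ∀ q : H ⊗[k] (H ⊗[k] (H ⊗[k] A)), 0 * q = 0 := fun q => zero_mul q; simp [sandwich, h0, h0']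
      | add x y hx hy => simp only [map_add, add_mul, mul_add, hx, hy, sandwich, map_add]
      | tmul g b =>
        simp [Gmap, sleg13, rleg12, sleg23, sandwich, collapse, qleg13, qleg24, mulIn,
          Algebra.TensorProduct.tmul_mul_tmul, antipode_mul (k := k), mul_assoc]

end Main

/-- for a quasitriangular Hopf algebra `H` with antipode `γ`, R-matrix `R`,
involution `τ` and a universal S-matrix `S ∈ H ⊗ A` with `(ε⊗id)(S) = 1`, the matrix `S`
is invertible in `H ⊗ A` with inverse `S⁻¹ = ((γτ)(R₁) ⊗ 1) · (γ⊗id)(S) · (R₂ ⊗ 1)`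
(implicit summation over `R = R₁ ⊗ R₂`). -/
theorem SMatrix_inverse
    {k H A : Type*} [Field k] [Ring H] [HopfAlgebra k H] [Ring A] [Algebra k A]
    (R Rinv : H ⊗[k] H) (hR : IsUnivRMatrix k H R Rinv)
    (τ : H →ₗ[k] H) (hτ : IsSkewInvolution k H τ)
    (S : H ⊗[k] A) (hS : IsSMatrix k H A R τ S)
    (hone : epsA k H A S = 1) :
    S * sandwich k H A
        ((TensorProduct.map ((HopfAlgebra.antipode (R := k) (A := H)) ∘ₗ τ) LinearMap.id) R)
        ((TensorProduct.map (HopfAlgebra.antipode (R := k) (A := H)) LinearMap.id) S) = 1 ∧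
    sandwich k H A
        ((TensorProduct.map ((HopfAlgebra.antipode (R := k) (A := H)) ∘ₗ τ) LinearMap.id) R)
        ((TensorProduct.map (HopfAlgebra.antipode (R := k) (A := H)) LinearMap.id) S) * S = 1 := by
  have hS' : deltaLA k H A S =
      sleg13 k H A S * rleg12 k H A ((TensorProduct.map τ LinearMap.id) R) * sleg23 k H A S := hS
  set T := sandwich k H A
      ((TensorProduct.map ((HopfAlgebra.antipode (R := k) (A := H)) ∘ₗ τ) LinearMap.id) R)
      ((TensorProduct.map (HopfAlgebra.antipode (R := k) (A := H)) LinearMap.id) S) with hT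
  set T' := sandwich k H A ((TensorProduct.map τ (HopfAlgebra.antipode (R := k) (A := H))) R)
      ((TensorProduct.map (HopfAlgebra.antipode (R := k) (A := H)) LinearMap.id) S) with hT'
  have h1 : T * S = 1 := by
    have := congrArg Fmap hS'
    rw [F_deltaLA, hone, keyF] at this
    rw [← hT] at this
    rw [← this, Algebra.TensorProduct.one_def]
  have h2 : S * T' = 1 := by
    have := congrArg Gmap hS'
    rw [G_deltaLA, hone, keyG] at this
    rw [← hT'] at this
    rw [← this, Algebra.TensorProduct.one_def]
  have hTT' : T = T' := by
    calc T = T * (S * T') := by rw [h2, mul_one]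
    _ = T * S * T' := by rw [mul_assoc]
    _ = T' := by rw [h1, one_mul]
  exact ⟨by rw [hTT', h2], h1⟩
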